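/- Let R be a commutative ring, τ ∈ Mat_{n+1}(R) stable, and a ∈ GL_{n+1}(R) commuting with τ. Suppose that for all u ∈ M_{H,τ_H}(R) (endomorphisms of V_H commuting with τ_H), the element 1 + εu of GL over R[ε]/(ε²) satisfies a(1 + εu) ∈ H(R[ε]/(ε²))·G_τ(R[ε]/(ε²)). Then a² is a scalar matrix. -/

import Mathlib

section MatGGP

variable {S : Type*} [CommRing S] {m : ℕ}

/-- `v` is a cyclic vector for the matrix `τ`: `S[τ] v` is everything. -/
def MatCyclicVec (τ : Matrix (Fin m) (Fin m) S) (v : Fin m → S) : Prop :=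
  ∀ w : Fin m → S, ∃ p : Polynomial S, (Polynomial.aeval τ p).mulVec v = w

/-- `ℓ` is a cyclic covector for the matrix `τ`: `ℓ S[τ]` is everything. -/
def MatCoCyclicVec (τ : Matrix (Fin m) (Fin m) S) (ℓ : Fin m → S) : Prop :=
  ∀ w : Fin m → S, ∃ p : Polynomial S, Matrix.vecMul ℓ (Polynomial.aeval τ p) = w

/-- `τ` is stable with respect to `(e, e*)`: both `e` and `e*` are `τ`-cyclic. -/
def MatStable (τ : Matrix (Fin m) (Fin m) S) (e eStar : Fin m → S) : Prop :=
  MatCyclicVec τ e ∧ MatCoCyclicVec τ eStar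

/-- The projection matrix `1_H = 1 - e e*`. -/
def oneHMat (e eStar : Fin m → S) : Matrix (Fin m) (Fin m) S :=
  1 - Matrix.vecMulVec e eStar

/-- The compression `τ_H = 1_H τ 1_H`. -/
def tauHMat (τ : Matrix (Fin m) (Fin m) S) (e eStar : Fin m → S) :
    Matrix (Fin m) (Fin m) S :=
  oneHMat e eStar * τ * oneHMat e eStar

/-- Membership in `H(S)`: an invertible matrix fixing `e` and `e*`. -/
def MemH (e eStar : Fin m → S) (g : Matrix (Fin m) (Fin m) S) : Prop :=
  IsUnit g ∧ g.mulVec e = e ∧ Matrix.vecMul eStar g = eStar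

/-- Membership in the product set `H(S) · G_τ(S)`. -/
def MemHGt (τ : Matrix (Fin m) (Fin m) S) (e eStar : Fin m → S)
    (a : Matrix (Fin m) (Fin m) S) : Prop :=
  ∃ h b : Matrix (Fin m) (Fin m) S,
    MemH e eStar h ∧ IsUnit b ∧ b * τ = τ * b ∧ a = h * b

/-- Membership in `H_{τ_H}(S)`: an element of `H(S)` commuting with the compression `τ_H`. -/
def MemHtauH (τ : Matrix (Fin m) (Fin m) S) (e eStar : Fin m → S)
    (y : Matrix (Fin m) (Fin m) S) : Prop :=
  MemH e eStar y ∧ y * tauHMat τ e eStar = tauHMat τ e eStar * y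

end MatGGP

namespace GGP12

open Matrix Polynomial TrivSqZeroExt

variable {R : Type*} [CommRing R] {n : ℕ}

local notation "Mat" => Matrix (Fin (n + 1)) (Fin (n + 1)) R

/-- A matrix killing all vectors is zero. -/
lemma eq_zero_of_mulVec {A : Mat} (h : ∀ v, A.mulVec v = 0) : A = 0 := by
  ext i j
  have := congrFun (h (Pi.single j 1)) i
  simpa using this

lemma eq_zero_of_vecMul {A : Mat} (h : ∀ v, Matrix.vecMul v A = 0) : A = 0 := by
  ext i j
  have := congrFun (h (Pi.single i 1)) j
  simpa using this

lemma commute_aeval {A τ : Mat} (hA : A * τ = τ * A) (p : Polynomial R) :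
    A * (Polynomial.aeval τ p) = (Polynomial.aeval τ p) * A := by
  have h : Commute A τ := hA
  rw [Polynomial.aeval_eq_sum_range, Finset.mul_sum, Finset.sum_mul]
  refine Finset.sum_congr rfl fun i _ => ?_
  rw [mul_smul_comm, smul_mul_assoc, (h.pow_right i).eq]

lemma inj_mulVec {τ : Mat} {e : Fin (n + 1) → R} (hcyc : MatCyclicVec τ e)
    {A : Mat} (hA : A * τ = τ * A) (h0 : A.mulVec e = 0) : A = 0 := by
  refine eq_zero_of_mulVec fun v => ?_
  obtain ⟨p, hp⟩ := hcyc v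
  rw [← hp, Matrix.mulVec_mulVec, commute_aeval hA, ← Matrix.mulVec_mulVec, h0,
    Matrix.mulVec_zero]

lemma inj_vecMul {τ : Mat} {eStar : Fin (n + 1) → R} (hcoc : MatCoCyclicVec τ eStar)
    {A : Mat} (hA : A * τ = τ * A) (h0 : Matrix.vecMul eStar A = 0) : A = 0 := by
  refine eq_zero_of_vecMul fun v => ?_
  obtain ⟨p, hp⟩ := hcoc v
  rw [← hp, Matrix.vecMul_vecMul, ← commute_aeval hA, ← Matrix.vecMul_vecMul, h0,
    Matrix.zero_vecMul]

section Proj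

variable (e eStar : Fin (n + 1) → R)

lemma vecMulVec_mulVec (v : Fin (n + 1) → R) :
    (Matrix.vecMulVec e eStar).mulVec v = (dotProduct eStar v) • e := by
  ext i
  simp only [Matrix.mulVec, Matrix.vecMulVec_apply, dotProduct, Pi.smul_apply,
    smul_eq_mul, Finset.sum_mul]
  rw [← Finset.sum_mul, Finset.sum_mul]
  refine Finset.sum_congr rfl fun k _ => by ring

lemma vecMul_vecMulVec (v : Fin (n + 1) → R) :
    Matrix.vecMul v (Matrix.vecMulVec e eStar) = (dotProduct v e) • eStar := by
  ext j
  simp only [Matrix.vecMul, Matrix.vecMulVec_apply, dotProduct, Pi.smul_apply,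
    smul_eq_mul]
  rw [Finset.sum_mul]
  refine Finset.sum_congr rfl fun k _ => by ring

lemma oneH_mulVec (v : Fin (n + 1) → R) :
    (oneHMat e eStar).mulVec v = v - (dotProduct eStar v) • e := by
  rw [oneHMat, Matrix.sub_mulVec, Matrix.one_mulVec, vecMulVec_mulVec]

lemma vecMul_oneH (v : Fin (n + 1) → R) :
    Matrix.vecMul v (oneHMat e eStar) = v - (dotProduct v e) • eStar := by
  rw [oneHMat, Matrix.vecMul_sub, Matrix.vecMul_one, vecMul_vecMulVec]

variable (he : dotProduct eStar e = 1)
include he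

lemma oneH_mulVec_e : (oneHMat e eStar).mulVec e = 0 := by
  rw [oneH_mulVec, he, one_smul, sub_self]

lemma eStar_vecMul_oneH : Matrix.vecMul eStar (oneHMat e eStar) = 0 := by
  rw [vecMul_oneH, he, one_smul, sub_self]

lemma oneH_idem : oneHMat e eStar * oneHMat e eStar = oneHMat e eStar := by
  have h : Matrix.vecMulVec e eStar * Matrix.vecMulVec e eStar = Matrix.vecMulVec e eStar := by
    ext i j
    simp only [Matrix.mul_apply, Matrix.vecMulVec_apply]
    calc ∑ k, e i * eStar k * (e k * eStar j) = e i * eStar j * ∑ k, eStar k * e k := by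
          rw [Finset.mul_sum]; refine Finset.sum_congr rfl fun k _ => by ring
      _ = e i * eStar j := by rw [← dotProduct]; rw [he, mul_one]
  rw [oneHMat, sub_mul, mul_sub, mul_sub, one_mul, mul_one, h]
  rw [one_mul]; abel


lemma pi_mul_tauH (τ : Mat) :
    oneHMat e eStar * tauHMat τ e eStar = tauHMat τ e eStar := by
  rw [tauHMat, ← Matrix.mul_assoc, ← Matrix.mul_assoc, oneH_idem e eStar he]

lemma tauH_mul_pi (τ : Mat) :
    tauHMat τ e eStar * oneHMat e eStar = tauHMat τ e eStar := by
  rw [tauHMat, Matrix.mul_assoc, Matrix.mul_assoc, oneH_idem e eStar he, Matrix.mul_assoc]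

end Proj

/-- `u k = τ_H ^ k * 1_H`. -/
def uMat (τ : Matrix (Fin (n+1)) (Fin (n+1)) R) (e eStar : Fin (n + 1) → R) (k : ℕ) :
    Matrix (Fin (n+1)) (Fin (n+1)) R :=
  (tauHMat τ e eStar) ^ k * oneHMat e eStar

section UMat

variable (τ : Matrix (Fin (n+1)) (Fin (n+1)) R) (e eStar : Fin (n + 1) → R) (he : dotProduct eStar e = 1)
include he

lemma u_pow_pi (k : ℕ) :
    (tauHMat τ e eStar) ^ (k + 1) * oneHMat e eStar = (tauHMat τ e eStar) ^ (k + 1) := by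
  rw [pow_succ, Matrix.mul_assoc, tauH_mul_pi e eStar he]

lemma pi_mul_u (k : ℕ) : oneHMat e eStar * uMat τ e eStar k = uMat τ e eStar k := by
  cases k with
  | zero => simp only [uMat, pow_zero, Matrix.one_mul]; exact oneH_idem e eStar he
  | succ k =>
    simp only [uMat]
    rw [u_pow_pi τ e eStar he k, pow_succ', ← Matrix.mul_assoc, pi_mul_tauH e eStar he]

lemma u_succ (k : ℕ) :
    uMat τ e eStar (k + 1) = oneHMat e eStar * τ * (uMat τ e eStar k) := by
  have h1 : uMat τ e eStar (k + 1) = tauHMat τ e eStar * uMat τ e eStar k := by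
    simp only [uMat]
    rw [pow_succ', Matrix.mul_assoc]
  rw [h1]
  unfold tauHMat
  rw [Matrix.mul_assoc _ (oneHMat e eStar) (uMat τ e eStar k), pi_mul_u τ e eStar he]

lemma u_succ' (k : ℕ) :
    uMat τ e eStar (k + 1) = uMat τ e eStar k * (τ * oneHMat e eStar) := by
  simp only [uMat]
  rw [u_pow_pi τ e eStar he k, pow_succ, Matrix.mul_assoc
    ((tauHMat τ e eStar) ^ k) (oneHMat e eStar) (τ * oneHMat e eStar)]
  congr 1
  unfold tauHMat
  rw [Matrix.mul_assoc]

lemma u_mulVec_e (k : ℕ) : (uMat τ e eStar k).mulVec e = 0 := by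
  simp only [uMat]
  rw [← Matrix.mulVec_mulVec, oneH_mulVec_e e eStar he, Matrix.mulVec_zero]

lemma eStar_vecMul_u (k : ℕ) : Matrix.vecMul eStar (uMat τ e eStar k) = 0 := by
  cases k with
  | zero =>
    simp only [uMat, pow_zero, Matrix.one_mul]
    exact eStar_vecMul_oneH e eStar he
  | succ k =>
    rw [u_succ τ e eStar he, Matrix.mul_assoc, ← Matrix.vecMul_vecMul,
      eStar_vecMul_oneH e eStar he, Matrix.zero_vecMul]

lemma u_comm_tauH (k : ℕ) :
    uMat τ e eStar k * tauHMat τ e eStar = tauHMat τ e eStar * uMat τ e eStar k := by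
  have h1 : uMat τ e eStar k * tauHMat τ e eStar = (tauHMat τ e eStar) ^ (k + 1) := by
    simp only [uMat]
    rw [Matrix.mul_assoc, pi_mul_tauH e eStar he, ← pow_succ]
  have h2 : tauHMat τ e eStar * uMat τ e eStar k = (tauHMat τ e eStar) ^ (k + 1) := by
    simp only [uMat]
    rw [← Matrix.mul_assoc, ← pow_succ', u_pow_pi τ e eStar he]
  rw [h1, h2]

end UMat

lemma vecMul_smulMat (v : Fin (n+1) → R) (c : R) (A : Matrix (Fin (n+1)) (Fin (n+1)) R) :
    Matrix.vecMul v (c • A) = c • Matrix.vecMul v A := by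
  ext j
  simp [Matrix.vecMul, dotProduct, Finset.smul_sum, mul_left_comm, Finset.mul_sum]

section Adj

variable (τ : Matrix (Fin (n+1)) (Fin (n+1)) R) (e eStar : Fin (n + 1) → R)
  (he : dotProduct eStar e = 1)
include he

lemma adj (k : ℕ) : ∀ X Y : Matrix (Fin (n+1)) (Fin (n+1)) R,
    X * τ = τ * X → Y * τ = τ * Y → X * Y = Y * X →
    ∃ Q : Matrix (Fin (n+1)) (Fin (n+1)) R, Q * τ = τ * Q ∧
      Q.mulVec e = (Y * uMat τ e eStar k * X).mulVec e ∧
      Matrix.vecMul eStar (X * uMat τ e eStar k * Y) = Matrix.vecMul eStar Q := by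
  induction k with
  | zero =>
    intro X Y hX hY hXY
    refine ⟨X * Y - (dotProduct eStar (X.mulVec e)) • Y, ?_, ?_, ?_⟩
    · rw [Matrix.sub_mul, Matrix.mul_sub, Matrix.mul_assoc, hY, ← Matrix.mul_assoc, hX,
        Matrix.mul_assoc, Matrix.smul_mul, Matrix.mul_smul, hY]
    · have hu : uMat τ e eStar 0 = oneHMat e eStar := by simp [uMat]
      rw [hu]
      simp only [← Matrix.mulVec_mulVec, Matrix.sub_mulVec, Matrix.smul_mulVec]
      rw [oneH_mulVec e eStar (X.mulVec e), Matrix.mulVec_sub, Matrix.mulVec_smul]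
      rw [Matrix.mulVec_mulVec, hXY, ← Matrix.mulVec_mulVec]
    · have hu : uMat τ e eStar 0 = oneHMat e eStar := by simp [uMat]
      rw [hu]
      simp only [← Matrix.vecMul_vecMul, Matrix.vecMul_sub, vecMul_smulMat]
      rw [vecMul_oneH e eStar, Matrix.sub_vecMul, Matrix.smul_vecMul]
      rw [Matrix.dotProduct_mulVec eStar X e]
  | succ k ih =>
    intro X Y hX hY hXY
    have hXτ : (X * τ) * τ = τ * (X * τ) := by
      rw [hX, Matrix.mul_assoc, hX]
    have hXτY : (X * τ) * Y = Y * (X * τ) := by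
      rw [hX, Matrix.mul_assoc, hXY, ← Matrix.mul_assoc, ← hY, Matrix.mul_assoc]
    obtain ⟨Q1, hQ1c, hQ1e, hQ1s⟩ := ih (X * τ) Y hXτ hY hXτY
    obtain ⟨Q2, hQ2c, hQ2e, hQ2s⟩ := ih τ Y rfl hY hY.symm
    set c : R := dotProduct eStar (X.mulVec e) with hc
    set π : Matrix (Fin (n+1)) (Fin (n+1)) R := oneHMat e eStar with hπ
    set uk : Matrix (Fin (n+1)) (Fin (n+1)) R := uMat τ e eStar k with huk
    refine ⟨Q1 - c • Q2, ?_, ?_, ?_⟩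
    · rw [Matrix.sub_mul, Matrix.mul_sub, hQ1c, Matrix.smul_mul, Matrix.mul_smul, hQ2c]
    · -- vector side
      have hm : Y * uMat τ e eStar (k+1) * X = (Y * uk * τ) * (π * X) := by
        rw [u_succ' τ e eStar he k]
        simp only [Matrix.mul_assoc]
        rfl
      have hmm : Y * uk * (X * τ) = (Y * uk * τ) * X := by
        simp only [Matrix.mul_assoc]
        rw [hX]
      calc (Q1 - c • Q2) *ᵥ e = Q1 *ᵥ e - c • Q2 *ᵥ e := by
            rw [Matrix.sub_mulVec, Matrix.smul_mulVec]
        _ = ((Y * uk * τ) * X) *ᵥ e - c • (Y * uk * τ) *ᵥ e := by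
            rw [hQ1e, hQ2e, hmm]
        _ = (Y * uk * τ) *ᵥ (X *ᵥ e - c • e) := by
            rw [Matrix.mulVec_sub, Matrix.mulVec_smul, ← Matrix.mulVec_mulVec]
        _ = (Y * uMat τ e eStar (k+1) * X) *ᵥ e := by
            rw [hm, ← Matrix.mulVec_mulVec e ((Y * uk * τ)) (π * X),
              ← Matrix.mulVec_mulVec e π X, hπ, oneH_mulVec e eStar, ← hc]
    · -- covector side
      have hm : X * uMat τ e eStar (k+1) * Y = (X * π) * (τ * uk * Y) := by
        rw [u_succ τ e eStar he k]
        simp only [Matrix.mul_assoc]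
        rfl
      have h1 : Matrix.vecMul eStar ((X * τ) * uk * Y) = Matrix.vecMul eStar Q1 := hQ1s
      have h2 : Matrix.vecMul eStar (τ * uk * Y) = Matrix.vecMul eStar Q2 := hQ2s
      calc Matrix.vecMul eStar (X * uMat τ e eStar (k+1) * Y)
          = Matrix.vecMul (Matrix.vecMul eStar (X * π)) (τ * uk * Y) := by
            rw [hm, ← Matrix.vecMul_vecMul]
        _ = Matrix.vecMul (Matrix.vecMul eStar X - c • eStar) (τ * uk * Y) := by
            rw [← Matrix.vecMul_vecMul eStar X π, hπ, vecMul_oneH e eStar,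
              ← Matrix.dotProduct_mulVec eStar X e, ← hc]
        _ = Matrix.vecMul eStar ((X * τ) * uk * Y) - c • Matrix.vecMul eStar (τ * uk * Y) := by
            rw [Matrix.sub_vecMul, Matrix.smul_vecMul, Matrix.vecMul_vecMul]
            congr 2
            simp only [Matrix.mul_assoc]
        _ = Matrix.vecMul eStar (Q1 - c • Q2) := by
            rw [h1, h2, Matrix.vecMul_sub, vecMul_smulMat]

end Adj

section Dual

local notation "S" => DualNumber R
local notation "MatS" => Matrix (Fin (n + 1)) (Fin (n + 1)) (DualNumber R)

lemma mapFst_mul (X Y : MatS) :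
    (X * Y).map TrivSqZeroExt.fst = X.map TrivSqZeroExt.fst * Y.map TrivSqZeroExt.fst := by
  ext i j
  simp [Matrix.mul_apply, TrivSqZeroExt.fst_sum]

lemma mapSnd_mul (X Y : MatS) :
    (X * Y).map TrivSqZeroExt.snd
      = X.map TrivSqZeroExt.fst * Y.map TrivSqZeroExt.snd
        + X.map TrivSqZeroExt.snd * Y.map TrivSqZeroExt.fst := by
  ext i j
  simp [Matrix.mul_apply, TrivSqZeroExt.snd_sum, TrivSqZeroExt.snd_mul,
    Finset.sum_add_distrib]

lemma mapFst_inl (A : Matrix (Fin (n+1)) (Fin (n+1)) R) :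
    (A.map (algebraMap R S)).map TrivSqZeroExt.fst = A := by
  ext i j
  simp [TrivSqZeroExt.algebraMap_eq_inl]

lemma mapSnd_inl (A : Matrix (Fin (n+1)) (Fin (n+1)) R) :
    (A.map (algebraMap R S)).map TrivSqZeroExt.snd = 0 := by
  ext i j
  simp [TrivSqZeroExt.algebraMap_eq_inl]

lemma mapFst_add (X Y : MatS) :
    (X + Y).map TrivSqZeroExt.fst = X.map TrivSqZeroExt.fst + Y.map TrivSqZeroExt.fst := by
  ext i j
  simp

lemma mapSnd_add (X Y : MatS) :
    (X + Y).map TrivSqZeroExt.snd = X.map TrivSqZeroExt.snd + Y.map TrivSqZeroExt.snd := by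
  ext i j
  simp

lemma mapFst_one : (1 : MatS).map TrivSqZeroExt.fst = 1 := by
  ext i j
  by_cases h : i = j <;> simp [Matrix.one_apply, h]

lemma mapSnd_one : (1 : MatS).map TrivSqZeroExt.snd = 0 := by
  ext i j
  by_cases h : i = j <;> simp [Matrix.one_apply, h]

lemma mapFst_eps_smul (A : Matrix (Fin (n+1)) (Fin (n+1)) R) :
    (((DualNumber.eps : S)) • A.map (algebraMap R S)).map TrivSqZeroExt.fst = 0 := by
  ext i j
  simp [smul_eq_mul, TrivSqZeroExt.algebraMap_eq_inl]

lemma mapSnd_eps_smul (A : Matrix (Fin (n+1)) (Fin (n+1)) R) :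
    (((DualNumber.eps : S)) • A.map (algebraMap R S)).map TrivSqZeroExt.snd = A := by
  ext i j
  simp [TrivSqZeroExt.snd_mul, TrivSqZeroExt.algebraMap_eq_inl, smul_eq_mul]

lemma mapFst_mulVec (X : MatS) (v : Fin (n+1) → R)
    (w : Fin (n+1) → S) (hw : X.mulVec (fun i => algebraMap R S (v i)) = w) :
    (X.map TrivSqZeroExt.fst).mulVec v = fun i => TrivSqZeroExt.fst (w i) := by
  ext i
  have := congrArg TrivSqZeroExt.fst (congrFun hw i)
  simpa [Matrix.mulVec, dotProduct, TrivSqZeroExt.fst_sum,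
    TrivSqZeroExt.algebraMap_eq_inl] using this

lemma mapSnd_mulVec (X : MatS) (v : Fin (n+1) → R)
    (w : Fin (n+1) → S) (hw : X.mulVec (fun i => algebraMap R S (v i)) = w) :
    (X.map TrivSqZeroExt.snd).mulVec v = fun i => TrivSqZeroExt.snd (w i) := by
  ext i
  have := congrArg TrivSqZeroExt.snd (congrFun hw i)
  simpa [Matrix.mulVec, dotProduct, TrivSqZeroExt.snd_sum, TrivSqZeroExt.snd_mul,
    TrivSqZeroExt.algebraMap_eq_inl] using this

lemma mapFst_vecMul (X : MatS) (v : Fin (n+1) → R)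
    (w : Fin (n+1) → S) (hw : Matrix.vecMul (fun i => algebraMap R S (v i)) X = w) :
    Matrix.vecMul v (X.map TrivSqZeroExt.fst) = fun i => TrivSqZeroExt.fst (w i) := by
  ext i
  have := congrArg TrivSqZeroExt.fst (congrFun hw i)
  simpa [Matrix.vecMul, dotProduct, TrivSqZeroExt.fst_sum,
    TrivSqZeroExt.algebraMap_eq_inl] using this

lemma mapSnd_vecMul (X : MatS) (v : Fin (n+1) → R)
    (w : Fin (n+1) → S) (hw : Matrix.vecMul (fun i => algebraMap R S (v i)) X = w) :
    Matrix.vecMul v (X.map TrivSqZeroExt.snd) = fun i => TrivSqZeroExt.snd (w i) := by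
  ext i
  have := congrArg TrivSqZeroExt.snd (congrFun hw i)
  simpa [Matrix.vecMul, dotProduct, TrivSqZeroExt.snd_sum, TrivSqZeroExt.snd_mul,
    TrivSqZeroExt.algebraMap_eq_inl] using this

/-- Extract the first-order data from membership of `a(1+εu)` in `H⋅G_τ` over dual numbers. -/
lemma extract {τ a u : Matrix (Fin (n+1)) (Fin (n+1)) R}
    (e eStar : Fin (n + 1) → R)
    (hcoc : MatCoCyclicVec τ eStar) (ha : IsUnit a) (haτ : a * τ = τ * a)
    (hmem : ∃ h b : MatS,
      (IsUnit h ∧ h.mulVec (fun i => algebraMap R S (e i)) = (fun i => algebraMap R S (e i)) ∧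
        Matrix.vecMul (fun i => algebraMap R S (eStar i)) h = (fun i => algebraMap R S (eStar i)))
      ∧ IsUnit b ∧ b * τ.map (algebraMap R S) = τ.map (algebraMap R S) * b
      ∧ (a.map (algebraMap R S)) * (1 + (DualNumber.eps : S) • u.map (algebraMap R S)) = h * b) :
    ∃ h1 B1 : Matrix (Fin (n+1)) (Fin (n+1)) R,
      h1.mulVec e = 0 ∧ Matrix.vecMul eStar h1 = 0 ∧ B1 * τ = τ * B1 ∧
        a * u = h1 * a + B1 := by
  obtain ⟨h, b, ⟨-, hge, hgs⟩, -, hbτ, heq⟩ := hmem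
  set H0 := h.map (TrivSqZeroExt.fst : S → R) with hH0
  set H1 := h.map (TrivSqZeroExt.snd : S → R) with hH1
  set B0 := b.map (TrivSqZeroExt.fst : S → R) with hB0
  set B1 := b.map (TrivSqZeroExt.snd : S → R) with hB1
  -- component equations of the main identity
  have e1 : ((1 : MatS) + (DualNumber.eps : S) • u.map (algebraMap R S)).map
      (TrivSqZeroExt.fst : S → R) = 1 := by
    rw [mapFst_add, mapFst_one, mapFst_eps_smul, add_zero]
  have e2 : ((1 : MatS) + (DualNumber.eps : S) • u.map (algebraMap R S)).map
      (TrivSqZeroExt.snd : S → R) = u := by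
    rw [mapSnd_add, mapSnd_one, mapSnd_eps_smul, zero_add]
  have hfst : a = H0 * B0 := by
    have h' := congrArg (fun X : MatS => X.map (TrivSqZeroExt.fst : S → R)) heq
    simp only [mapFst_mul] at h'
    rw [mapFst_inl, e1, Matrix.mul_one] at h'
    exact h'
  have hsnd : a * u = H0 * B1 + H1 * B0 := by
    have h' := congrArg (fun X : MatS => X.map (TrivSqZeroExt.snd : S → R)) heq
    simp only [mapSnd_mul] at h'
    rw [mapFst_inl, mapSnd_inl, e1, e2, Matrix.zero_mul, add_zero] at h'
    exact h'
  -- components of commuting with τ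
  have hB0τ : B0 * τ = τ * B0 := by
    have h' := congrArg (fun X : MatS => X.map (TrivSqZeroExt.fst : S → R)) hbτ
    simp only [mapFst_mul] at h'
    rw [mapFst_inl] at h'
    exact h'
  have hB1τ : B1 * τ = τ * B1 := by
    have h' := congrArg (fun X : MatS => X.map (TrivSqZeroExt.snd : S → R)) hbτ
    simp only [mapSnd_mul] at h'
    rw [mapFst_inl, mapSnd_inl, Matrix.zero_mul, Matrix.mul_zero, add_zero, zero_add] at h'
    exact h'
  -- components of fixing e and eStar
  have hH0e : H0.mulVec e = e := by
    have := mapFst_mulVec h e _ hge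
    simpa [TrivSqZeroExt.algebraMap_eq_inl] using this
  have hH1e : H1.mulVec e = 0 := by
    have := mapSnd_mulVec h e _ hge
    simpa [TrivSqZeroExt.algebraMap_eq_inl, Pi.zero_def] using this
  have hH0s : Matrix.vecMul eStar H0 = eStar := by
    have := mapFst_vecMul h eStar _ hgs
    simpa [TrivSqZeroExt.algebraMap_eq_inl] using this
  have hH1s : Matrix.vecMul eStar H1 = 0 := by
    have := mapSnd_vecMul h eStar _ hgs
    simpa [TrivSqZeroExt.algebraMap_eq_inl, Pi.zero_def] using this
  -- B0 = a
  have hB0a : B0 = a := by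
    have hcomm : (B0 - a) * τ = τ * (B0 - a) := by
      rw [Matrix.sub_mul, Matrix.mul_sub, hB0τ, haτ]
    have hvm : Matrix.vecMul eStar (B0 - a) = 0 := by
      rw [Matrix.vecMul_sub]
      have : Matrix.vecMul eStar a = Matrix.vecMul eStar B0 := by
        rw [hfst, ← Matrix.vecMul_vecMul, hH0s]
      rw [this, sub_self]
    have := inj_vecMul hcoc hcomm hvm
    have h0 : B0 - a = 0 := this
    rw [sub_eq_zero] at h0
    exact h0
  -- H0 = 1
  have hH01 : H0 = 1 := by
    obtain ⟨A, hA⟩ := ha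
    have h1 : H0 * a = a := by rw [← hB0a, ← hfst, hB0a]
    calc H0 = H0 * (a * (↑A⁻¹ : Matrix (Fin (n+1)) (Fin (n+1)) R)) := by
          rw [← hA, Units.mul_inv, Matrix.mul_one]
      _ = (H0 * a) * (↑A⁻¹ : Matrix (Fin (n+1)) (Fin (n+1)) R) := by rw [Matrix.mul_assoc]
      _ = a * (↑A⁻¹ : Matrix (Fin (n+1)) (Fin (n+1)) R) := by rw [h1]
      _ = 1 := by rw [← hA, Units.mul_inv]
  refine ⟨H1, B1, hH1e, hH1s, hB1τ, ?_⟩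
  rw [hsnd, hH01, Matrix.one_mul, hB0a]
  exact add_comm _ _

end Dual

end GGP12


open GGP12 in
/-- Let `R` be a commutative ring, `τ ∈ Mat_{n+1}(R)` stable, and `a ∈ GL_{n+1}(R)` commuting
with `τ`.  Suppose that for all `u ∈ M_{H,τ_H}(R)` (operators supported on `V_H` commuting
with `τ_H`), the element `a(1 + εu)` over `R[ε]/(ε²)` lies in `H · G_τ`.  Then `a²` is a
scalar matrix. -/
theorem stmt_12 {R : Type*} [CommRing R] (n : ℕ)
    (e eStar : Fin (n + 1) → R) (he : dotProduct eStar e = 1)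
    (τ : Matrix (Fin (n + 1)) (Fin (n + 1)) R) (hτ : MatStable τ e eStar)
    (a : Matrix (Fin (n + 1)) (Fin (n + 1)) R) (ha : IsUnit a) (haτ : a * τ = τ * a)
    (H : ∀ u : Matrix (Fin (n + 1)) (Fin (n + 1)) R,
      u.mulVec e = 0 → Matrix.vecMul eStar u = 0 →
      u * tauHMat τ e eStar = tauHMat τ e eStar * u →
      MemHGt (τ.map (algebraMap R (DualNumber R)))
        (fun i => algebraMap R (DualNumber R) (e i))
        (fun i => algebraMap R (DualNumber R) (eStar i))
        ((a.map (algebraMap R (DualNumber R))) *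
          (1 + (DualNumber.eps : DualNumber R) • u.map (algebraMap R (DualNumber R))))) :
    ∃ z : R, a * a = z • (1 : Matrix (Fin (n + 1)) (Fin (n + 1)) R) := by
  classical
  obtain ⟨A, hA⟩ := ha
  set b : Matrix (Fin (n+1)) (Fin (n+1)) R := ↑A⁻¹ with hbdef
  have hab : a * b = 1 := by rw [← hA]; exact A.mul_inv
  have hba : b * a = 1 := by rw [← hA]; exact A.inv_mul
  have hbτ : b * τ = τ * b := by
    calc b * τ = b * (τ * (a * b)) := by rw [hab, Matrix.mul_one]
      _ = b * ((τ * a) * b) := by rw [Matrix.mul_assoc]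
      _ = b * ((a * τ) * b) := by rw [haτ]
      _ = (b * a) * (τ * b) := by simp only [Matrix.mul_assoc]
      _ = τ * b := by rw [hba, Matrix.one_mul]
  have haIsUnit : IsUnit a := ⟨A, hA⟩
  have habba : a * b = b * a := by rw [hab, hba]
  -- the key identity, for every k
  have key : ∀ k : ℕ, a.mulVec ((uMat τ e eStar k).mulVec (b.mulVec e))
      = b.mulVec ((uMat τ e eStar k).mulVec (a.mulVec e)) := by
    intro k
    have hmem := H (uMat τ e eStar k) (u_mulVec_e τ e eStar he k)
      (eStar_vecMul_u τ e eStar he k) (u_comm_tauH τ e eStar he k)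
    obtain ⟨hm, bm, hMemH, _, hbmτ, heqm⟩ := hmem
    obtain ⟨h1, B1, hh1e, hh1s, hB1τ, hrel⟩ :=
      GGP12.extract e eStar hτ.2 haIsUnit haτ
        ⟨hm, bm, ⟨hMemH.1, hMemH.2.1, hMemH.2.2⟩, ‹IsUnit bm›, hbmτ, heqm⟩
    set uk := uMat τ e eStar k with hukdef
    -- a * uk * b = h1 + C with C := B1 * b commuting with τ
    set C : Matrix (Fin (n+1)) (Fin (n+1)) R := B1 * b with hCdef
    have h4 : a * uk * b = h1 + C := by
      rw [hrel, Matrix.add_mul, Matrix.mul_assoc, hab, Matrix.mul_one]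
    have hCτ : C * τ = τ * C := by
      rw [hCdef, Matrix.mul_assoc, hbτ, ← Matrix.mul_assoc, hB1τ, Matrix.mul_assoc]
    obtain ⟨Q, hQτ, hQe, hQs⟩ := adj τ e eStar he k a b haτ hbτ habba
    have hCQ : C = Q := by
      have hcomm : (C - Q) * τ = τ * (C - Q) := by
        rw [Matrix.sub_mul, Matrix.mul_sub, hCτ, hQτ]
      have hvm : Matrix.vecMul eStar (C - Q) = 0 := by
        have hC' : Matrix.vecMul eStar C = Matrix.vecMul eStar (a * uk * b) := by
          rw [h4, Matrix.vecMul_add, hh1s, zero_add]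
        rw [Matrix.vecMul_sub, hC', hQs, sub_self]
      have := inj_vecMul hτ.2 hcomm hvm
      rwa [sub_eq_zero] at this
    have h5 : (a * uk * b).mulVec e = (b * uk * a).mulVec e := by
      rw [h4, Matrix.add_mulVec, hh1e, zero_add, hCQ, hQe]
    have h6 := h5
    simp only [← Matrix.mulVec_mulVec] at h6
    exact h6
  -- the vector sequences
  set x : ℕ → (Fin (n+1) → R) := fun k => (uMat τ e eStar k).mulVec (a.mulVec e) with hx
  set y : ℕ → (Fin (n+1) → R) := fun k => (uMat τ e eStar k).mulVec (b.mulVec e) with hy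
  have key' : ∀ k, a.mulVec (y k) = b.mulVec (x k) := key
  -- recursions
  have hrecx : ∀ (v : Fin (n+1) → R) (k : ℕ),
      (uMat τ e eStar (k+1)).mulVec v
        = τ.mulVec ((uMat τ e eStar k).mulVec v)
          - (dotProduct eStar (τ.mulVec ((uMat τ e eStar k).mulVec v))) • e := by
    intro v k
    rw [u_succ τ e eStar he k]
    rw [← Matrix.mulVec_mulVec, ← Matrix.mulVec_mulVec, oneH_mulVec e eStar]
  -- the B-step
  have hB : ∀ k : ℕ,
      (dotProduct eStar (τ.mulVec (x k))) • (b.mulVec e)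
        = (dotProduct eStar (τ.mulVec (y k))) • (a.mulVec e) := by
    intro k
    have h1 := key' (k+1)
    have hxk : x (k+1) = τ.mulVec (x k) - (dotProduct eStar (τ.mulVec (x k))) • e :=
      hrecx (a.mulVec e) k
    have hyk : y (k+1) = τ.mulVec (y k) - (dotProduct eStar (τ.mulVec (y k))) • e :=
      hrecx (b.mulVec e) k
    rw [hxk, hyk] at h1
    rw [Matrix.mulVec_sub, Matrix.mulVec_sub, Matrix.mulVec_smul, Matrix.mulVec_smul] at h1
    have hax : ∀ v : Fin (n+1) → R, a.mulVec (τ.mulVec v) = τ.mulVec (a.mulVec v) := by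
      intro v
      rw [Matrix.mulVec_mulVec, Matrix.mulVec_mulVec, haτ]
    have hbx : ∀ v : Fin (n+1) → R, b.mulVec (τ.mulVec v) = τ.mulVec (b.mulVec v) := by
      intro v
      rw [Matrix.mulVec_mulVec, Matrix.mulVec_mulVec, hbτ]
    rw [hax (y k), hbx (x k), key' k] at h1
    have := sub_right_injective h1
    exact this.symm
  -- mulVec helpers
  have habv : a.mulVec (b.mulVec e) = e := by
    rw [Matrix.mulVec_mulVec, hab, Matrix.one_mulVec]
  have hbav : b.mulVec (a.mulVec e) = e := by
    rw [Matrix.mulVec_mulVec, hba, Matrix.one_mulVec]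
  have haav : a.mulVec (a.mulVec e) = (a * a).mulVec e :=
    Matrix.mulVec_mulVec e a a
  -- the D-identities
  have hD : ∀ k : ℕ,
      (dotProduct eStar (τ.mulVec (x k))) • e
        = (dotProduct eStar (τ.mulVec (y k))) • ((a * a).mulVec e) := by
    intro k
    have h1 := congrArg a.mulVec (hB k)
    rw [Matrix.mulVec_smul, Matrix.mulVec_smul, habv, haav] at h1
    exact h1
  -- D(-1)
  have hDm1 : (dotProduct eStar (a.mulVec e)) • e
      = (dotProduct eStar (b.mulVec e)) • ((a * a).mulVec e) := by
    have h0 := key' 0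
    have hu0 : uMat τ e eStar 0 = oneHMat e eStar := by
      simp [uMat]
    have hx0 : x 0 = a.mulVec e - (dotProduct eStar (a.mulVec e)) • e := by
      rw [hx]
      simp only
      rw [hu0, oneH_mulVec e eStar]
    have hy0 : y 0 = b.mulVec e - (dotProduct eStar (b.mulVec e)) • e := by
      rw [hy]
      simp only
      rw [hu0, oneH_mulVec e eStar]
    rw [hx0, hy0] at h0
    rw [Matrix.mulVec_sub, Matrix.mulVec_sub, Matrix.mulVec_smul, Matrix.mulVec_smul,
      habv, hbav] at h0
    have h2 := sub_right_injective h0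
    have h3 := congrArg a.mulVec h2
    rw [Matrix.mulVec_smul, Matrix.mulVec_smul, habv, haav] at h3
    exact h3.symm
  -- the span of the functionals
  set φ : ℕ → (Fin (n+1) → R) := fun k => Matrix.vecMul eStar (τ * uMat τ e eStar k) with hφ
  set W : Submodule R (Fin (n+1) → R) :=
    Submodule.span R (insert eStar (Set.range φ)) with hW
  -- property P holds on W
  have hPW : ∀ ψ, ψ ∈ W → (dotProduct ψ (a.mulVec e)) • e
      = (dotProduct ψ (b.mulVec e)) • ((a * a).mulVec e) := by
    intro ψ hψ
    induction hψ using Submodule.span_induction with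
    | mem ψ hmem =>
      rcases hmem with h | ⟨k, rfl⟩
      · rw [h]
        exact hDm1
      · have hd := hD k
        have e1 : τ.mulVec (x k) = (τ * uMat τ e eStar k).mulVec (a.mulVec e) :=
          Matrix.mulVec_mulVec (a.mulVec e) τ (uMat τ e eStar k)
        have e2 : τ.mulVec (y k) = (τ * uMat τ e eStar k).mulVec (b.mulVec e) :=
          Matrix.mulVec_mulVec (b.mulVec e) τ (uMat τ e eStar k)
        rw [e1, e2] at hd
        have g1 : dotProduct (φ k) (a.mulVec e)
            = dotProduct eStar ((τ * uMat τ e eStar k).mulVec (a.mulVec e)) :=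
          (Matrix.dotProduct_mulVec eStar (τ * uMat τ e eStar k) (a.mulVec e)).symm
        have g2 : dotProduct (φ k) (b.mulVec e)
            = dotProduct eStar ((τ * uMat τ e eStar k).mulVec (b.mulVec e)) :=
          (Matrix.dotProduct_mulVec eStar (τ * uMat τ e eStar k) (b.mulVec e)).symm
        rw [g1, g2]
        exact hd
    | zero => simp
    | add ψ χ _ _ ih1 ih2 =>
      rw [add_dotProduct, add_dotProduct, add_smul, add_smul, ih1, ih2]
    | smul r ψ _ ih =>
      rw [smul_dotProduct, smul_dotProduct, smul_eq_mul, smul_eq_mul,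
        mul_smul, mul_smul, ih]
  -- W is stable under right multiplication by τ
  have hTW : ∀ ψ, ψ ∈ W → Matrix.vecMul ψ τ ∈ W := by
    intro ψ hψ
    induction hψ using Submodule.span_induction with
    | mem ψ hmem =>
      rcases hmem with h | ⟨k, rfl⟩
      · rw [h]
        have hu0 : uMat τ e eStar 0 = oneHMat e eStar := by simp [uMat]
        have hφ0 : φ 0 = Matrix.vecMul eStar τ
            - (dotProduct (Matrix.vecMul eStar τ) e) • eStar := by
          rw [hφ]
          simp only
          rw [hu0, ← Matrix.vecMul_vecMul, vecMul_oneH e eStar]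
        have : Matrix.vecMul eStar τ = φ 0
            + (dotProduct (Matrix.vecMul eStar τ) e) • eStar := by
          rw [hφ0]; abel
        rw [this]
        exact Submodule.add_mem _
          (Submodule.subset_span (Set.mem_insert_of_mem _ ⟨0, rfl⟩))
          (Submodule.smul_mem _ _ (Submodule.subset_span (Set.mem_insert _ _)))
      · have hrec : φ (k+1) = Matrix.vecMul (φ k) τ
            - (dotProduct (Matrix.vecMul (φ k) τ) e) • eStar := by
          rw [hφ]
          simp only
          rw [u_succ' τ e eStar he k]
          have hassoc : τ * (uMat τ e eStar k * (τ * oneHMat e eStar))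
              = ((τ * uMat τ e eStar k) * τ) * oneHMat e eStar := by
            simp only [Matrix.mul_assoc]
          rw [hassoc, ← Matrix.vecMul_vecMul, vecMul_oneH e eStar, ← Matrix.vecMul_vecMul]
        have : Matrix.vecMul (φ k) τ = φ (k+1)
            + (dotProduct (Matrix.vecMul (φ k) τ) e) • eStar := by
          rw [hrec]; abel
        rw [this]
        exact Submodule.add_mem _
          (Submodule.subset_span (Set.mem_insert_of_mem _ ⟨k+1, rfl⟩))
          (Submodule.smul_mem _ _ (Submodule.subset_span (Set.mem_insert _ _)))
    | zero =>
      rw [Matrix.zero_vecMul]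
      exact Submodule.zero_mem _
    | add ψ χ hψ' hχ' ih1 ih2 =>
      rw [Matrix.add_vecMul]
      exact Submodule.add_mem _ ih1 ih2
    | smul r ψ hψ' ih =>
      rw [Matrix.smul_vecMul]
      exact Submodule.smul_mem _ _ ih
  -- powers of τ
  have hpow : ∀ m : ℕ, Matrix.vecMul eStar (τ ^ m) ∈ W := by
    intro m
    induction m with
    | zero =>
      rw [pow_zero, Matrix.vecMul_one]
      exact Submodule.subset_span (Set.mem_insert _ _)
    | succ m ih =>
      rw [pow_succ, ← Matrix.vecMul_vecMul]
      exact hTW _ ih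
  -- aeval: eStar * a lies in W
  have haW : Matrix.vecMul eStar a ∈ W := by
    obtain ⟨p, hp⟩ := hτ.2 (Matrix.vecMul eStar a)
    rw [← hp]
    let L : Matrix (Fin (n+1)) (Fin (n+1)) R →ₗ[R] (Fin (n+1) → R) :=
      { toFun := fun B => Matrix.vecMul eStar B
        map_add' := fun B C => Matrix.vecMul_add B C eStar
        map_smul' := fun c B => vecMul_smulMat eStar c B }
    have hLa : Matrix.vecMul eStar (Polynomial.aeval τ p) = L (Polynomial.aeval τ p) := rfl
    rw [hLa, Polynomial.aeval_eq_sum_range, map_sum]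
    refine Submodule.sum_mem _ fun i _ => ?_
    rw [map_smul]
    exact Submodule.smul_mem _ _ (hpow i)
  -- conclude
  have hP := hPW _ haW
  have hone : dotProduct (Matrix.vecMul eStar a) (b.mulVec e) = 1 := by
    rw [← Matrix.dotProduct_mulVec, Matrix.mulVec_mulVec, hab, Matrix.one_mulVec, he]
  have hz : dotProduct (Matrix.vecMul eStar a) (a.mulVec e)
      = dotProduct eStar ((a * a).mulVec e) := by
    rw [← Matrix.dotProduct_mulVec, Matrix.mulVec_mulVec]
  rw [hone, hz, one_smul] at hP
  refine ⟨dotProduct eStar ((a * a).mulVec e), ?_⟩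
  have haaτ : (a * a) * τ = τ * (a * a) := by
    calc (a * a) * τ = a * (a * τ) := by rw [Matrix.mul_assoc]
      _ = a * (τ * a) := by rw [haτ]
      _ = (a * τ) * a := by rw [Matrix.mul_assoc]
      _ = (τ * a) * a := by rw [haτ]
      _ = τ * (a * a) := by rw [Matrix.mul_assoc]
  set z : R := dotProduct eStar ((a * a).mulVec e) with hzdef
  have hcomm : (a * a - z • (1 : Matrix (Fin (n+1)) (Fin (n+1)) R)) * τ
      = τ * (a * a - z • (1 : Matrix (Fin (n+1)) (Fin (n+1)) R)) := by
    rw [Matrix.sub_mul, Matrix.mul_sub, haaτ, Matrix.smul_mul, Matrix.mul_smul,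
      Matrix.one_mul, Matrix.mul_one]
  have hmv : (a * a - z • (1 : Matrix (Fin (n+1)) (Fin (n+1)) R)).mulVec e = 0 := by
    rw [Matrix.sub_mulVec, Matrix.smul_mulVec, Matrix.one_mulVec, ← hP, sub_self]
  have := inj_mulVec hτ.1 hcomm hmv
  rwa [sub_eq_zero] at this
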